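/- arXiv:1412.4599 — 2 statements merged into one kernel-verified Lean document; each statement's English description precedes it below -/
import Mathlib

section
/- If G is a digraph with w(G) > 0 and n > w(G), then there is no digraph homomorphism from G to the directed cycle Cₙ; consequently w(G) is the largest n such that an epimorphism G → Cₙ exists. -/
/-- A route in a digraph `(V, E)` starting at a vertex `u` is encoded by a list of
steps `(s, w)` where `s = 1` means the edge is traversed forwards into `w` and
`s = -1` means it is traversed backwards. -/
def IsRoute {V : Type*} (E : V → V → Prop) : V → List (ℤ × V) → Prop
  | _, [] => True
  | u, (s, w) :: t => ((s = 1 ∧ E u w) ∨ (s = -1 ∧ E w u)) ∧ IsRoute E w t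

/-- The final vertex of a route starting at `u` with step list `l`. -/
def routeEnd {V : Type*} : V → List (ℤ × V) → V
  | u, [] => u
  | _, (_, w) :: t => routeEnd w t

/-- The weight `σ(R)` of a route: the sum of its signs. -/
def routeWeight {V : Type*} (l : List (ℤ × V)) : ℤ := (l.map Prod.fst).sum

/-- A digraph homomorphism maps arcs to arcs. -/
def IsDigraphHom {V₁ V₂ : Type*} (E₁ : V₁ → V₁ → Prop) (E₂ : V₂ → V₂ → Prop)
    (φ : V₁ → V₂) : Prop :=
  ∀ u v, E₁ u v → E₂ (φ u) (φ v)

/-- The set `W` of positive weights of closed routes in the digraph `(V, E)`. -/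
def closedWeights {V : Type*} (E : V → V → Prop) : Set ℤ :=
  {n : ℤ | 0 < n ∧ ∃ (u : V) (l : List (ℤ × V)),
    IsRoute E u l ∧ routeEnd u l = u ∧ routeWeight l = n}

/-- `g` is the greatest common divisor of the set `S ⊆ ℤ` (with the convention
`gcd ∅ = 0`). -/
def IsSetGcd (S : Set ℤ) (g : ℤ) : Prop :=
  0 ≤ g ∧ (∀ n ∈ S, g ∣ n) ∧ ∀ d : ℤ, (∀ n ∈ S, d ∣ n) → d ∣ g

/-- Weak connectedness: any two vertices are joined by a route. -/
def WeaklyConnected {V : Type*} (E : V → V → Prop) : Prop :=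
  ∀ u v : V, ∃ l : List (ℤ × V), IsRoute E u l ∧ routeEnd u l = v

/-- Arc relation of the directed cycle `Cₙ` on `ZMod n`. -/
def cycleRel (n : ℕ) : ZMod n → ZMod n → Prop := fun i j => j = i + 1

/-- Arc relation of the directed path with vertex set `Fin n`. -/
def pathRel (n : ℕ) : Fin n → Fin n → Prop := fun i j => (i : ℕ) + 1 = (j : ℕ)

section Aux
variable {V : Type*} {E : V → V → Prop}

@[simp] lemma isRoute_nil (u : V) : IsRoute E u ([] : List (ℤ × V)) := trivial

lemma isRoute_cons {u v : V} {s : ℤ} {t : List (ℤ × V)} :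
    IsRoute E u ((s, v) :: t) ↔
      ((s = 1 ∧ E u v) ∨ (s = -1 ∧ E v u)) ∧ IsRoute E v t := Iff.rfl

@[simp] lemma routeEnd_nil (u : V) : routeEnd u ([] : List (ℤ × V)) = u := rfl

@[simp] lemma routeEnd_cons (u v : V) (s : ℤ) (t : List (ℤ × V)) :
    routeEnd u ((s, v) :: t) = routeEnd v t := rfl

@[simp] lemma routeWeight_nil : routeWeight ([] : List (ℤ × V)) = 0 := rfl

@[simp] lemma routeWeight_cons (s : ℤ) (v : V) (t : List (ℤ × V)) :
    routeWeight ((s, v) :: t) = s + routeWeight t := by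
  simp [routeWeight]

@[simp] lemma routeEnd_append (u : V) (l₁ l₂ : List (ℤ × V)) :
    routeEnd u (l₁ ++ l₂) = routeEnd (routeEnd u l₁) l₂ := by
  induction l₁ generalizing u with
  | nil => rfl
  | cons h t ih => obtain ⟨s, v⟩ := h; simp [ih]

@[simp] lemma routeWeight_append (l₁ l₂ : List (ℤ × V)) :
    routeWeight (l₁ ++ l₂) = routeWeight l₁ + routeWeight l₂ := by
  simp [routeWeight]

lemma isRoute_append {u : V} {l₁ l₂ : List (ℤ × V)}
    (h₁ : IsRoute E u l₁) (h₂ : IsRoute E (routeEnd u l₁) l₂) :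
    IsRoute E u (l₁ ++ l₂) := by
  induction l₁ generalizing u with
  | nil => exact h₂
  | cons h t ih =>
    obtain ⟨s, v⟩ := h
    exact ⟨h₁.1, ih h₁.2 h₂⟩

def routeRev {V : Type*} : V → List (ℤ × V) → List (ℤ × V)
  | _, [] => []
  | u, (s, v) :: t => routeRev v t ++ [(-s, u)]

@[simp] lemma routeRev_end (u : V) (l : List (ℤ × V)) :
    routeEnd (routeEnd u l) (routeRev u l) = u := by
  induction l generalizing u with
  | nil => rfl
  | cons h t ih => obtain ⟨s, v⟩ := h; simp [routeRev, ih]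

@[simp] lemma routeRev_weight (u : V) (l : List (ℤ × V)) :
    routeWeight (routeRev u l) = - routeWeight l := by
  induction l generalizing u with
  | nil => rfl
  | cons h t ih =>
    obtain ⟨s, v⟩ := h
    simp [routeRev, ih]

lemma routeRev_isRoute {u : V} {l : List (ℤ × V)} (h : IsRoute E u l) :
    IsRoute E (routeEnd u l) (routeRev u l) := by
  induction l generalizing u with
  | nil => trivial
  | cons p t ih =>
    obtain ⟨s, v⟩ := p
    refine isRoute_append (l₁ := routeRev v t) (ih h.2) ?_
    rw [routeEnd_cons, routeRev_end]
    refine ⟨?_, trivial⟩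
    rcases h.1 with ⟨hs, he⟩ | ⟨hs, he⟩
    · exact Or.inr ⟨by rw [hs], he⟩
    · exact Or.inl ⟨by rw [hs]; ring, he⟩

lemma hom_route {n : ℕ} {φ : V → ZMod n} (hφ : IsDigraphHom E (cycleRel n) φ)
    {u : V} {l : List (ℤ × V)} (h : IsRoute E u l) :
    φ (routeEnd u l) = φ u + (routeWeight l : ZMod n) := by
  induction l generalizing u with
  | nil => simp
  | cons p t ih =>
    obtain ⟨s, v⟩ := p
    have h2 := ih h.2
    rcases h.1 with ⟨hs, he⟩ | ⟨hs, he⟩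
    · have := hφ _ _ he
      rw [cycleRel] at this
      simp [h2, this, hs]; ring
    · have := hφ _ _ he
      rw [cycleRel] at this
      simp [h2, this, hs]

lemma exists_prefix :
    ∀ (l : List (ℤ × V)) (u : V), IsRoute E u l → ∀ k : ℤ, 0 ≤ k →
      k ≤ routeWeight l → ∃ l', IsRoute E u l' ∧ routeWeight l' = k
  | [], u, _, k, h0, h1 => ⟨[], trivial, by
      have : routeWeight ([] : List (ℤ × V)) = 0 := rfl
      rw [this] at h1 ⊢; omega⟩
  | (s, v) :: t, u, h, k, h0, h1 => by
    rcases eq_or_lt_of_le h0 with rfl | hk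
    · exact ⟨[], trivial, rfl⟩
    have hs : s = 1 ∨ s = -1 := by rcases h.1 with ⟨hs, _⟩ | ⟨hs, _⟩ <;> [left; right] <;> exact hs
    have h0' : 0 ≤ k - s := by rcases hs with rfl | rfl <;> omega
    have h1' : k - s ≤ routeWeight t := by
      have := h1; rw [routeWeight_cons] at this; omega
    obtain ⟨l', hl', hw'⟩ := exists_prefix t v h.2 (k - s) h0' h1'
    exact ⟨(s, v) :: l', ⟨h.1, hl'⟩, by rw [routeWeight_cons, hw']; ring⟩

lemma closed_repeat {u : V} {l : List (ℤ × V)} (hr : IsRoute E u l)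
    (he : routeEnd u l = u) :
    ∀ t : ℕ, ∃ l', IsRoute E u l' ∧ routeEnd u l' = u ∧
      routeWeight l' = t * routeWeight l
  | 0 => ⟨[], trivial, rfl, by simp⟩
  | (t + 1) => by
    obtain ⟨l', h1, h2, h3⟩ := closed_repeat hr he t
    refine ⟨l ++ l', isRoute_append hr (by rw [he]; exact h1), by simp [he, h2], ?_⟩
    push_cast
    simp [h3]; ring

end Aux

section Main
variable {V : Type*} {E : V → V → Prop}

lemma closedWeights_nonempty (hconn : WeaklyConnected E) (w : ℕ) (hw : 0 < w)
    (hgcd : IsSetGcd (closedWeights E) (w : ℤ)) : (closedWeights E).Nonempty := by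
  by_contra h
  rw [Set.not_nonempty_iff_eq_empty] at h
  have hd : ((w : ℤ) + 1) ∣ (w : ℤ) :=
    hgcd.2.2 _ (fun n hn => by simp [h] at hn)
  have := Int.le_of_dvd (by exact_mod_cast hw) hd
  omega

lemma dvd_all_closed (hconn : WeaklyConnected E) (w : ℕ) (hw : 0 < w)
    (hgcd : IsSetGcd (closedWeights E) (w : ℤ))
    {u : V} {l : List (ℤ × V)} (hr : IsRoute E u l) (he : routeEnd u l = u) :
    (w : ℤ) ∣ routeWeight l := by
  obtain ⟨m, hm0, u₁, M, hM, hMe, hMw⟩ := closedWeights_nonempty hconn w hw hgcd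
  have hmdvd : (w : ℤ) ∣ m := hgcd.2.1 m ⟨hm0, u₁, M, hM, hMe, hMw⟩
  set k := routeWeight l with hk
  set t : ℕ := k.natAbs + 1 with ht
  -- repeated loop at u₁ of weight t * m
  obtain ⟨M', hM'1, hM'2, hM'3⟩ := closed_repeat hM hMe t
  -- path from u to u₁ and back
  obtain ⟨p, hp, hpe⟩ := hconn u u₁
  -- big closed route at u
  have hbig : IsRoute E u (l ++ (p ++ (M' ++ routeRev u p))) := by
    refine isRoute_append hr ?_
    rw [he]
    refine isRoute_append hp ?_
    rw [hpe]
    refine isRoute_append hM'1 ?_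
    rw [hM'2, ← hpe]
    exact routeRev_isRoute hp
  have hbige : routeEnd u (l ++ (p ++ (M' ++ routeRev u p))) = u := by
    rw [routeEnd_append, he, routeEnd_append, hpe, routeEnd_append, hM'2, ← hpe,
      routeRev_end]
  have hbigw : routeWeight (l ++ (p ++ (M' ++ routeRev u p))) = k + t * m := by
    simp [hM'3, hMw, hk]
  have hpos : 0 < k + t * m := by
    have h1 : (1 : ℤ) ≤ m := hm0
    have h2 : (t : ℤ) ≤ (t : ℤ) * m := le_mul_of_one_le_right (by positivity) h1
    have h3 : -k ≤ (k.natAbs : ℤ) := by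
      rcases Int.natAbs_eq k with h | h <;> omega
    have h4 : (t : ℤ) = (k.natAbs : ℤ) + 1 := by exact_mod_cast rfl
    linarith
  have hmem : k + t * m ∈ closedWeights E :=
    ⟨hpos, u, _, hbig, hbige, hbigw⟩
  have := hgcd.2.1 _ hmem
  have h5 : (w : ℤ) ∣ (t : ℤ) * m := Dvd.dvd.mul_left hmdvd _
  simpa using dvd_sub this h5

end Main

/-- if `w(G) = w > 0` then there is no digraph homomorphism from `G`
to `Cₙ` for `n > w`; consequently `w` is the largest `n` such that an epimorphism
`G → Cₙ` exists. -/
theorem weight_isGreatest_cycle_epi {V : Type*} [Fintype V] [Nonempty V]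
    (E : V → V → Prop) (hconn : WeaklyConnected E) (w : ℕ) (hw : 0 < w)
    (hgcd : IsSetGcd (closedWeights E) (w : ℤ)) :
    (∀ n : ℕ, w < n → ¬ ∃ φ : V → ZMod n, IsDigraphHom E (cycleRel n) φ) ∧
      IsGreatest {n : ℕ | 0 < n ∧ ∃ φ : V → ZMod n,
        IsDigraphHom E (cycleRel n) φ ∧ Function.Surjective φ} w := by
  classical
  have key : ∀ n : ℕ, (∃ φ : V → ZMod n, IsDigraphHom E (cycleRel n) φ) →
      (n : ℤ) ∣ (w : ℤ) := by
    rintro n ⟨φ, hφ⟩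
    refine hgcd.2.2 _ ?_
    rintro m ⟨-, u, l, hr, he, hwt⟩
    have h1 := hom_route hφ hr
    rw [he, hwt] at h1
    have h2 : ((m : ZMod n)) = 0 := by
      have := h1.symm
      rwa [left_eq_add] at h1
    exact (ZMod.intCast_zmod_eq_zero_iff_dvd m n).mp h2
  constructor
  · intro n hn h
    have h1 : (n : ℤ) ≤ (w : ℤ) := Int.le_of_dvd (by exact_mod_cast hw) (key n h)
    omega
  constructor
  · refine ⟨hw, ?_⟩
    haveI : NeZero w := ⟨hw.ne'⟩
    obtain ⟨u₀⟩ := ‹Nonempty V›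
    choose L hL1 hL2 using hconn u₀
    set φ : V → ZMod w := fun v => ((routeWeight (L v) : ZMod w)) with hφdef
    have hom : IsDigraphHom E (cycleRel w) φ := by
      intro u v he
      have hrev : IsRoute E v (routeRev u₀ (L v)) := by
        have := routeRev_isRoute (hL1 v); rwa [hL2 v] at this
      have hr : IsRoute E u₀ (L u ++ ((1, v) :: routeRev u₀ (L v))) := by
        refine isRoute_append (hL1 u) ?_
        rw [hL2 u]
        exact ⟨Or.inl ⟨rfl, he⟩, hrev⟩
      have hend : routeEnd u₀ (L u ++ ((1, v) :: routeRev u₀ (L v))) = u₀ := by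
        have h := routeRev_end u₀ (L v)
        rw [hL2 v] at h
        rw [routeEnd_append, hL2 u, routeEnd_cons, h]
      have hdvd := dvd_all_closed hconn w hw hgcd hr hend
      have hweq : routeWeight (L u ++ ((1, v) :: routeRev u₀ (L v))) =
          routeWeight (L u) + 1 - routeWeight (L v) := by
        simp; ring
      rw [hweq] at hdvd
      have h0 : ((routeWeight (L u) + 1 - routeWeight (L v) : ℤ) : ZMod w) = 0 :=
        (ZMod.intCast_zmod_eq_zero_iff_dvd _ _).mpr hdvd
      push_cast at h0
      show φ v = φ u + 1
      simp only [hφdef]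
      linear_combination -h0
    refine ⟨φ, hom, ?_⟩
    obtain ⟨m, hm0, u₁, M, hM, hMe, hMw⟩ := closedWeights_nonempty hconn w hw hgcd
    have hmd : (w : ℤ) ∣ m := hgcd.2.1 _ ⟨hm0, u₁, M, hM, hMe, hMw⟩
    have hwm : (w : ℤ) ≤ m := Int.le_of_dvd hm0 hmd
    intro t
    set k₀ : ℕ := (t - φ u₁).val with hk₀
    have hk₀lt : (k₀ : ℤ) < w := by exact_mod_cast ZMod.val_lt _
    obtain ⟨l', hl', hw'⟩ := exists_prefix M u₁ hM k₀ (by positivity)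
      (by rw [hMw]; linarith)
    refine ⟨routeEnd u₁ l', ?_⟩
    have h1 := hom_route hom hl'
    rw [hw'] at h1
    rw [h1]
    push_cast
    rw [hk₀]
    simp [ZMod.natCast_val, ZMod.cast_id]
  · rintro n ⟨hn, φ, hφ, -⟩
    have h1 : (n : ℤ) ≤ (w : ℤ) := Int.le_of_dvd (by exact_mod_cast hw) (key n ⟨φ, hφ⟩)
    omega
end

section
/- If ε : G₁ → G₂ is a digraph homomorphism between finite weakly connected digraphs with w(G₁) = w(G₂) = 0, then d(G₂) ≥ d(G₁), where d denotes the diameter (maximal route weight between pairs of vertices). -/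
lemma isRoute_map {V₁ V₂ : Type*} {E₁ : V₁ → V₁ → Prop} {E₂ : V₂ → V₂ → Prop}
    {ε : V₁ → V₂} (hε : IsDigraphHom E₁ E₂ ε) :
    ∀ (u : V₁) (l : List (ℤ × V₁)), IsRoute E₁ u l →
      IsRoute E₂ (ε u) (l.map (fun p => (p.1, ε p.2)))
  | _, [], _ => trivial
  | u, (s, w) :: t, ⟨h1, h2⟩ => by
    refine ⟨?_, isRoute_map hε w t h2⟩
    rcases h1 with ⟨hs, he⟩ | ⟨hs, he⟩
    · exact Or.inl ⟨hs, hε _ _ he⟩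
    · exact Or.inr ⟨hs, hε _ _ he⟩

/-- a digraph homomorphism between finite weakly connected digraphs
of weight zero forces `d(G₂) ≥ d(G₁)` for the diameters (maximal route weights). -/
theorem diameter_le_of_hom {V₁ V₂ : Type*} [Fintype V₁] [Fintype V₂]
    (E₁ : V₁ → V₁ → Prop) (E₂ : V₂ → V₂ → Prop)
    (hc₁ : WeaklyConnected E₁) (hc₂ : WeaklyConnected E₂)
    (ε : V₁ → V₂) (hε : IsDigraphHom E₁ E₂ ε)
    (hz₁ : ∀ (u : V₁) (l : List (ℤ × V₁)),
      IsRoute E₁ u l → routeEnd u l = u → routeWeight l = 0)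
    (hz₂ : ∀ (u : V₂) (l : List (ℤ × V₂)),
      IsRoute E₂ u l → routeEnd u l = u → routeWeight l = 0)
    (d₁ d₂ : ℤ)
    (hd₁ : IsGreatest {n : ℤ | ∃ (u : V₁) (l : List (ℤ × V₁)),
      IsRoute E₁ u l ∧ routeWeight l = n} d₁)
    (hd₂ : IsGreatest {n : ℤ | ∃ (u : V₂) (l : List (ℤ × V₂)),
      IsRoute E₂ u l ∧ routeWeight l = n} d₂) :
    d₁ ≤ d₂ := by
  obtain ⟨u, l, hl, hw⟩ := hd₁.1
  exact hd₂.2 ⟨ε u, l.map (fun p => (p.1, ε p.2)), isRoute_map hε u l hl, by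
    simpa [routeWeight, List.map_map, Function.comp_def] using hw⟩
end
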